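/- Assume one of the following holds: (a) r₁ ≥ 0 and θ₂ − 1 < r₂ < 0; (b) r₂ ≥ 0 and θ₁ − 1 < r₁ < 0; (c) θ₁ − 1 < r₁ < 0, θ₂ − 1 < r₂ < 0 and (r₁ + 1 − θ₁)(r₂ + 1 − θ₂) > κ₁κ₂. Then there exist constants ρ₁, ρ₂ > max(θ₁, θ₂) such that, with g(x,y) := x^{−ρ₁} + y^{−ρ₂}, for every integer n ≥ 1 there is a constant C_n > 0 with ℒg(x,y) ≤ C_n · g(x,y) for all 0 < x, y ≤ n. -/

import Mathlib

open Real MeasureTheory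
open scoped Classical ENNReal

/-- The spectrally positive `α`-stable jump measure on `(0,∞)` with density
`z ↦ (α(α−1)/(Γ(α)Γ(2−α))) z^{−1−α}`. -/
noncomputable def muStable (α : ℝ) : Measure ℝ :=
  volume.withDensity fun z =>
    ENNReal.ofReal
      (if 0 < z then α * (α - 1) / (Real.Gamma α * Real.Gamma (2 - α)) * z ^ (-1 - α) else 0)

/-- Partial derivative in the first variable. -/
noncomputable def pX (g : ℝ → ℝ → ℝ) (x y : ℝ) : ℝ := deriv (fun t => g t y) x

/-- Partial derivative in the second variable. -/
noncomputable def pY (g : ℝ → ℝ → ℝ) (x y : ℝ) : ℝ := deriv (fun t => g x t) y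

/-- Second partial derivative in the first variable. -/
noncomputable def pXX (g : ℝ → ℝ → ℝ) (x y : ℝ) : ℝ := deriv (fun t => pX g t y) x

/-- Second partial derivative in the second variable. -/
noncomputable def pYY (g : ℝ → ℝ → ℝ) (x y : ℝ) : ℝ := deriv (fun t => pY g x t) y

/-- The generator `ℒ` of the two–dimensional system (1.1). -/
noncomputable def Lop (α₁ α₂ a₁ a₂ κ₁ κ₂ θ₁ θ₂ r₁₀ r₁₁ r₁₂ r₂₀ r₂₁ r₂₂
    b₁₀ b₁₁ b₁₂ b₂₀ b₂₁ b₂₂ : ℝ) (g : ℝ → ℝ → ℝ) (x y : ℝ) : ℝ :=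
  a₁ * x ^ θ₁ * y ^ κ₁ * pX g x y + a₂ * y ^ θ₂ * x ^ κ₂ * pY g x y
    - b₁₀ * x ^ r₁₀ * pX g x y + b₁₁ * x ^ r₁₁ * pXX g x y
    + b₁₂ * x ^ r₁₂ *
        ∫ z in Set.Ioi (0 : ℝ), (g (x + z) y - g x y - z * pX g x y) ∂ muStable α₁
    - b₂₀ * y ^ r₂₀ * pY g x y + b₂₁ * y ^ r₂₁ * pYY g x y
    + b₂₂ * y ^ r₂₂ *
        ∫ z in Set.Ioi (0 : ℝ), (g x (y + z) - g x y - z * pY g x y) ∂ muStable α₂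

/-- `rᵢ := min{ r_{ij} − ϱ_{ij} : j ∈ {0,1,2}, b_{ij} ≠ 0 }` where
`ϱ_{i0} = 1`, `ϱ_{i1} = 2`, `ϱ_{i2} = α`. -/
noncomputable def rExp (α r₀ r₁ r₂ b₀ b₁ b₂ : ℝ) : ℝ :=
  sInf {v : ℝ | (b₀ ≠ 0 ∧ v = r₀ - 1) ∨ (b₁ ≠ 0 ∧ v = r₁ - 2) ∨ (b₂ ≠ 0 ∧ v = r₂ - α)}

/-- `bᵢ := Σ_{j : b_{ij} ≠ 0, r_{ij} − ϱ_{ij} = rᵢ} b_{ij}`. -/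
noncomputable def bCoef (α r₀ r₁ r₂ b₀ b₁ b₂ : ℝ) : ℝ :=
  (if b₀ ≠ 0 ∧ r₀ - 1 = rExp α r₀ r₁ r₂ b₀ b₁ b₂ then b₀ else 0) +
    (if b₁ ≠ 0 ∧ r₁ - 2 = rExp α r₀ r₁ r₂ b₀ b₁ b₂ then b₁ else 0) +
    (if b₂ ≠ 0 ∧ r₂ - α = rExp α r₀ r₁ r₂ b₀ b₁ b₂ then b₂ else 0)

/-- `min{ r_{ij} − ϱ_{ij} : j ∈ {1,2}, b_{ij} ≠ 0 }`. -/
noncomputable def rExp12 (α r₁ r₂ b₁ b₂ : ℝ) : ℝ :=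
  sInf {v : ℝ | (b₁ ≠ 0 ∧ v = r₁ - 2) ∨ (b₂ ≠ 0 ∧ v = r₂ - α)}


/- ### Auxiliary lemmas ### -/

lemma hasDerivAt_one_add_rpow (p t : ℝ) (h : 1 + t ≠ 0) :
    HasDerivAt (fun s : ℝ => (1 + s) ^ p) (p * (1 + t) ^ (p - 1)) t := by
  have h1 : HasDerivAt (fun s : ℝ => 1 + s) 1 t := (hasDerivAt_id t).const_add 1
  simpa [Function.comp_def] using (Real.hasDerivAt_rpow_const (p := p) (Or.inl h)).comp t h1

lemma bernoulli_nonpos {p : ℝ} (hp : p ≤ 0) {s : ℝ} (hs : 0 ≤ s) :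
    1 + p * s ≤ (1 + s) ^ p := by
  set f : ℝ → ℝ := fun t => (1 + t) ^ p - p * t with hf
  have hder : ∀ t ∈ Set.Ici (0:ℝ), HasDerivAt f (p * (1 + t) ^ (p - 1) - p) t := by
    intro t ht
    have h2 : HasDerivAt (fun s : ℝ => p * s) p t := by
      simpa using (hasDerivAt_id t).const_mul p
    exact (hasDerivAt_one_add_rpow p t (by simp at ht; nlinarith)).sub h2
  have hmono : MonotoneOn f (Set.Ici 0) := by
    apply monotoneOn_of_deriv_nonneg (convex_Ici 0)
    · exact fun t ht => (hder t ht).differentiableAt.continuousAt.continuousWithinAt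
    · intro t ht
      rw [interior_Ici] at ht
      exact (hder t (Set.mem_Ici.mpr (le_of_lt (Set.mem_Ioi.mp ht)))).differentiableAt.differentiableWithinAt
    · intro t ht
      rw [interior_Ici] at ht
      rw [(hder t (Set.mem_Ici.mpr (le_of_lt (Set.mem_Ioi.mp ht)))).deriv]
      have h1 : (1 + t) ^ (p - 1) ≤ 1 :=
        Real.rpow_le_one_of_one_le_of_nonpos (by linarith [Set.mem_Ioi.mp ht]) (by linarith)
      nlinarith
  have := hmono (Set.self_mem_Ici) (Set.mem_Ici.mpr hs) hs
  simp only [hf] at this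
  norm_num at this
  linarith

lemma rpow_tangent_lb {ρ x z : ℝ} (hρ : 0 ≤ ρ) (hx : 0 < x) (hz : 0 ≤ z) :
    x ^ (-ρ) - ρ * z * x ^ (-ρ - 1) ≤ (x + z) ^ (-ρ) := by
  have h := bernoulli_nonpos (p := -ρ) (neg_nonpos.2 hρ) (s := z / x)
    (div_nonneg hz hx.le)
  have hxz : x + z = x * (1 + z / x) := by field_simp
  rw [hxz, Real.mul_rpow hx.le (by positivity)]
  have e : x ^ (-ρ - 1) = x ^ (-ρ) / x := by
    rw [show -ρ - 1 = -ρ + (-1) by ring, Real.rpow_add hx, Real.rpow_neg_one]; ring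
  have hxp : (0:ℝ) < x ^ (-ρ) := Real.rpow_pos_of_pos hx _
  calc x ^ (-ρ) - ρ * z * x ^ (-ρ - 1) = x ^ (-ρ) * (1 + (-ρ) * (z / x)) := by
        rw [e]; field_simp; ring
    _ ≤ x ^ (-ρ) * (1 + z / x) ^ (-ρ) := by
        exact mul_le_mul_of_nonneg_left h hxp.le

lemma rpow_taylor_ub {ρ x z : ℝ} (hρ : 0 < ρ) (hx : 0 < x) (hz : 0 ≤ z) :
    (x + z) ^ (-ρ) - x ^ (-ρ) + ρ * z * x ^ (-ρ - 1) ≤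
      ρ * (ρ + 1) / 2 * z ^ 2 * x ^ (-ρ - 2) := by
  set ψ : ℝ → ℝ := fun t =>
    (x + t) ^ (-ρ) + ρ * t * x ^ (-ρ - 1) - ρ * (ρ + 1) / 2 * t ^ 2 * x ^ (-ρ - 2) with hψ
  have hder : ∀ t ∈ Set.Ici (0:ℝ), HasDerivAt ψ
      ((-ρ) * (x + t) ^ (-ρ - 1) + ρ * x ^ (-ρ - 1)
        - ρ * (ρ + 1) * t * x ^ (-ρ - 2)) t := by
    intro t ht
    have h0 : (0:ℝ) < x + t := by have := Set.mem_Ici.mp ht; linarith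
    have h1 : HasDerivAt (fun s : ℝ => (x + s) ^ (-ρ)) ((-ρ) * (x + t) ^ (-ρ - 1)) t := by
      have hb : HasDerivAt (fun s : ℝ => x + s) 1 t := (hasDerivAt_id t).const_add x
      simpa [Function.comp_def] using (Real.hasDerivAt_rpow_const (p := -ρ) (Or.inl h0.ne')).comp t hb
    have h2 : HasDerivAt (fun s : ℝ => ρ * s * x ^ (-ρ - 1)) (ρ * x ^ (-ρ - 1)) t := by
      have := (hasDerivAt_id t).const_mul (ρ * x ^ (-ρ - 1))
      simp only [mul_one, id] at this
      rw [show (fun s : ℝ => ρ * s * x ^ (-ρ - 1)) = fun s => ρ * x ^ (-ρ - 1) * s by funext s; ring]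
      exact this
    have h3 : HasDerivAt (fun s : ℝ => ρ * (ρ + 1) / 2 * s ^ 2 * x ^ (-ρ - 2))
        (ρ * (ρ + 1) * t * x ^ (-ρ - 2)) t := by
      have := ((hasDerivAt_pow 2 t).const_mul (ρ * (ρ + 1) / 2)).mul_const (x ^ (-ρ - 2))
      refine this.congr_deriv ?_
      push_cast
      ring
    exact (h1.add h2).sub h3
  have hanti : AntitoneOn ψ (Set.Ici 0) := by
    apply antitoneOn_of_deriv_nonpos (convex_Ici 0)
    · exact fun t ht => (hder t ht).differentiableAt.continuousAt.continuousWithinAt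
    · intro t ht
      rw [interior_Ici] at ht
      exact (hder t (Set.mem_Ici.mpr (le_of_lt (Set.mem_Ioi.mp ht)))).differentiableAt.differentiableWithinAt
    · intro t ht
      rw [interior_Ici] at ht
      have ht' : 0 < t := Set.mem_Ioi.mp ht
      rw [(hder t ht'.le).deriv]
      have key : x ^ (-(ρ+1)) - (ρ+1) * t * x ^ (-(ρ+1) - 1) ≤ (x + t) ^ (-(ρ+1)) :=
        rpow_tangent_lb (by linarith) hx ht'.le
      rw [show -(ρ+1) - 1 = -ρ - 2 by ring, show -(ρ+1) = -ρ - 1 by ring] at key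
      nlinarith
  have := hanti (Set.self_mem_Ici) (Set.mem_Ici.mpr hz) hz
  simp only [hψ] at this
  norm_num at this
  linarith



noncomputable def stableC (α : ℝ) : ℝ := α * (α - 1) / (Real.Gamma α * Real.Gamma (2 - α))

noncomputable def jumpC (α ρ : ℝ) : ℝ :=
  stableC α * (ρ * (ρ + 1) / 2 * (1 / (2 - α)) + ρ * (1 / (α - 1)))

lemma stableC_pos {α : ℝ} (hα : 1 < α) (hα' : α < 2) : 0 < stableC α := by
  have h1 : 0 < Real.Gamma α := Real.Gamma_pos_of_pos (by linarith)
  have h2 : 0 < Real.Gamma (2 - α) := Real.Gamma_pos_of_pos (by linarith)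
  have : 0 < α * (α - 1) := by nlinarith
  exact div_pos this (mul_pos h1 h2)

lemma jumpC_pos {α ρ : ℝ} (hα : 1 < α) (hα' : α < 2) (hρ : 0 < ρ) : 0 < jumpC α ρ := by
  have h1 := stableC_pos hα hα'
  have h2 : 0 < 2 - α := by linarith
  have h3 : 0 < α - 1 := by linarith
  have : 0 < ρ * (ρ + 1) / 2 * (1 / (2 - α)) + ρ * (1 / (α - 1)) := by positivity
  exact mul_pos h1 this

lemma jump_integral_le {α ρ x : ℝ} (hα : 1 < α) (hα' : α < 2) (hρ : 0 < ρ) (hx : 0 < x) :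
    ∫ z in Set.Ioi (0:ℝ), ((x + z) ^ (-ρ) - x ^ (-ρ) - z * (-ρ * x ^ (-ρ - 1))) ∂ muStable α
      ≤ jumpC α ρ * x ^ (-ρ - α) := by
  classical
  set c := stableC α with hcdef
  have hc : 0 < c := stableC_pos hα hα'
  set d : ℝ → ℝ := fun z => if 0 < z then c * z ^ (-1 - α) else 0 with hd
  have hdmeas : Measurable d := by
    exact Measurable.ite (measurableSet_lt measurable_const measurable_id)
      (by fun_prop) measurable_const
  set f : ℝ → ℝ := fun z => (x + z) ^ (-ρ) - x ^ (-ρ) - z * (-ρ * x ^ (-ρ - 1)) with hf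
  set C1 := c * (ρ * (ρ + 1) / 2) * x ^ (-ρ - 2) with hC1
  set C2 := c * ρ * x ^ (-ρ - 1) with hC2
  set h : ℝ → ℝ := fun z => if z ≤ x then C1 * z ^ (1 - α) else C2 * z ^ (-α) with hh
  have hCnn1 : 0 ≤ C1 := by positivity
  have hCnn2 : 0 ≤ C2 := by positivity
  -- rewrite the withDensity integral
  have hmu : muStable α = volume.withDensity fun z => ((d z).toNNReal : ℝ≥0∞) := by
    rfl
  have step1 : ∫ z in Set.Ioi (0:ℝ), f z ∂ muStable α
      = ∫ z in Set.Ioi (0:ℝ), (d z).toNNReal • f z := by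
    rw [hmu, restrict_withDensity measurableSet_Ioi,
      integral_withDensity_eq_integral_smul hdmeas.real_toNNReal]
  rw [step1]
  -- pointwise bounds
  have hnonneg : 0 ≤ᵐ[volume.restrict (Set.Ioi (0:ℝ))] fun z => (d z).toNNReal • f z := by
    filter_upwards [self_mem_ae_restrict measurableSet_Ioi] with z hz
    have hz' : (0:ℝ) < z := hz
    have hfz : 0 ≤ f z := by
      have := rpow_tangent_lb (le_of_lt hρ) hx hz'.le (z := z)
      simp only [hf]; nlinarith
    exact smul_nonneg (by positivity) hfz
  have hle : (fun z => (d z).toNNReal • f z) ≤ᵐ[volume.restrict (Set.Ioi (0:ℝ))] h := by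
    filter_upwards [self_mem_ae_restrict measurableSet_Ioi] with z hz
    have hz' : (0:ℝ) < z := hz
    have hdz : d z = c * z ^ (-1 - α) := if_pos hz'
    have hdnn : 0 ≤ d z := by rw [hdz]; positivity
    have hsmul : (d z).toNNReal • f z = c * z ^ (-1 - α) * f z := by
      rw [NNReal.smul_def, Real.coe_toNNReal _ hdnn, hdz, smul_eq_mul]
    rw [hsmul]
    by_cases hzx : z ≤ x
    · have hfb : f z ≤ ρ * (ρ + 1) / 2 * z ^ 2 * x ^ (-ρ - 2) := by
        have := rpow_taylor_ub hρ hx hz'.le (z := z)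
        simp only [hf]; nlinarith
      have : c * z ^ (-1 - α) * f z ≤ c * z ^ (-1 - α) * (ρ * (ρ + 1) / 2 * z ^ 2 * x ^ (-ρ - 2)) :=
        mul_le_mul_of_nonneg_left hfb (by positivity)
      refine this.trans (le_of_eq ?_)
      rw [hh]; simp only [if_pos hzx, hC1]
      have e : z ^ (-1 - α) * z ^ 2 = z ^ (1 - α) := by
        rw [← Real.rpow_natCast z 2, ← Real.rpow_add hz']
        norm_num
        ring_nf
      calc c * z ^ (-1 - α) * (ρ * (ρ + 1) / 2 * z ^ 2 * x ^ (-ρ - 2))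
          = c * (ρ * (ρ + 1) / 2) * x ^ (-ρ - 2) * (z ^ (-1 - α) * z ^ 2) := by ring
        _ = c * (ρ * (ρ + 1) / 2) * x ^ (-ρ - 2) * z ^ (1 - α) := by rw [e]
    · have hxz : x ≤ x + z := by linarith
      have hmono : (x + z) ^ (-ρ) ≤ x ^ (-ρ) :=
        Real.rpow_le_rpow_of_nonpos hx hxz (by linarith)
      have hfb : f z ≤ ρ * z * x ^ (-ρ - 1) := by simp only [hf]; nlinarith
      have : c * z ^ (-1 - α) * f z ≤ c * z ^ (-1 - α) * (ρ * z * x ^ (-ρ - 1)) :=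
        mul_le_mul_of_nonneg_left hfb (by positivity)
      refine this.trans (le_of_eq ?_)
      rw [hh]; simp only [if_neg hzx, hC2]
      have e : z ^ (-1 - α) * z = z ^ (-α) := by
        nth_rewrite 2 [← Real.rpow_one z]
        rw [← Real.rpow_add hz']
        ring_nf
      calc c * z ^ (-1 - α) * (ρ * z * x ^ (-ρ - 1))
          = c * ρ * x ^ (-ρ - 1) * (z ^ (-1 - α) * z) := by ring
        _ = c * ρ * x ^ (-ρ - 1) * z ^ (-α) := by rw [e]
  -- integrability of h
  have hIocIoi : Set.Ioc (0:ℝ) x ∪ Set.Ioi x = Set.Ioi 0 := Set.Ioc_union_Ioi_eq_Ioi hx.le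
  have I1 : IntegrableOn (fun z : ℝ => C1 * z ^ (1 - α)) (Set.Ioc 0 x) := by
    exact ((intervalIntegral.intervalIntegrable_rpow' (by linarith : (-1:ℝ) < 1 - α)).1).const_mul C1
  have I1' : IntegrableOn h (Set.Ioc 0 x) := by
    apply I1.congr_fun (fun z hz => ?_) measurableSet_Ioc
    rw [hh]; simp only [if_pos hz.2]
  have I2 : IntegrableOn (fun z : ℝ => C2 * z ^ (-α)) (Set.Ioi x) := by
    exact (integrableOn_Ioi_rpow_of_lt (by linarith : -α < -1) hx).const_mul C2
  have I2' : IntegrableOn h (Set.Ioi x) := by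
    apply I2.congr_fun (fun z hz => ?_) measurableSet_Ioi
    rw [hh]; simp only [if_neg (not_le.mpr (Set.mem_Ioi.mp hz))]
  have hint : IntegrableOn h (Set.Ioi 0) := by
    rw [← hIocIoi]; exact I1'.union I2'
  have main := integral_mono_of_nonneg hnonneg hint hle
  refine main.trans ?_
  -- compute the integral of h
  have hsplit : ∫ z in Set.Ioi (0:ℝ), h z
      = (∫ z in Set.Ioc (0:ℝ) x, h z) + ∫ z in Set.Ioi x, h z := by
    rw [← hIocIoi]
    exact setIntegral_union (Set.Ioc_disjoint_Ioi le_rfl) measurableSet_Ioi I1' I2'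
  have hv1 : ∫ z in Set.Ioc (0:ℝ) x, h z = C1 * (x ^ (2 - α) / (2 - α)) := by
    have heq : Set.EqOn h (fun z => C1 * z ^ (1 - α)) (Set.Ioc 0 x) := fun z hz => by
      simp only [hh, if_pos hz.2]
    rw [setIntegral_congr_fun measurableSet_Ioc heq]
    rw [← intervalIntegral.integral_of_le hx.le]
    rw [intervalIntegral.integral_const_mul]
    rw [integral_rpow (Or.inl (by linarith : (-1:ℝ) < 1 - α))]
    have hne : (1 - α + 1 : ℝ) ≠ 0 := by
      have e : (1 - α + 1 : ℝ) = 2 - α := by ring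
      rw [e]; have h2 : (0:ℝ) < 2 - α := by linarith
      exact h2.ne'
    rw [Real.zero_rpow hne]
    rw [show (1 - α + 1 : ℝ) = 2 - α by ring]
    ring
  have hv2 : ∫ z in Set.Ioi x, h z = C2 * (x ^ (1 - α) / (α - 1)) := by
    have heq : Set.EqOn h (fun z => C2 * z ^ (-α)) (Set.Ioi x) := fun z hz => by
      simp only [hh, if_neg (not_le.mpr (Set.mem_Ioi.mp hz))]
    rw [setIntegral_congr_fun measurableSet_Ioi heq]
    rw [integral_const_mul]
    rw [integral_Ioi_rpow_of_lt (by linarith : -α < -1) hx]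
    rw [show (-α + 1 : ℝ) = 1 - α by ring]
    have h1 : (1 - α : ℝ) ≠ 0 := by
      have : (0:ℝ) < α - 1 := by linarith
      intro h0; rw [sub_eq_zero] at h0; linarith
    have h2 : (α - 1 : ℝ) ≠ 0 := by
      have : (0:ℝ) < α - 1 := by linarith
      exact this.ne'
    field_simp
    ring
  rw [hsplit, hv1, hv2, hC1, hC2]
  -- final computation
  have e1 : x ^ (-ρ - 2) * x ^ (2 - α) = x ^ (-ρ - α) := by
    rw [← Real.rpow_add hx]; ring_nf
  have e2 : x ^ (-ρ - 1) * x ^ (1 - α) = x ^ (-ρ - α) := by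
    rw [← Real.rpow_add hx]; ring_nf
  have h2α : (2 - α : ℝ) ≠ 0 := by linarith
  have hα1 : (α - 1 : ℝ) ≠ 0 := by linarith
  rw [jumpC, ← hcdef]
  apply le_of_eq
  calc c * (ρ * (ρ + 1) / 2) * x ^ (-ρ - 2) * (x ^ (2 - α) / (2 - α))
        + c * ρ * x ^ (-ρ - 1) * (x ^ (1 - α) / (α - 1))
      = c * (ρ * (ρ + 1) / 2) * (1 / (2 - α)) * (x ^ (-ρ - 2) * x ^ (2 - α))
        + c * ρ * (1 / (α - 1)) * (x ^ (-ρ - 1) * x ^ (1 - α)) := by ring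
    _ = c * (ρ * (ρ + 1) / 2 * (1 / (2 - α)) + ρ * (1 / (α - 1))) * x ^ (-ρ - α) := by
        rw [e1, e2]; ring

lemma pX_eval (ρ₁ ρ₂ x y : ℝ) (hx : x ≠ 0) :
    pX (fun x y => x ^ (-ρ₁) + y ^ (-ρ₂)) x y = -ρ₁ * x ^ (-ρ₁ - 1) := by
  unfold pX
  have h : HasDerivAt (fun t : ℝ => t ^ (-ρ₁) + y ^ (-ρ₂)) (-ρ₁ * x ^ (-ρ₁ - 1)) x := by
    simpa using (Real.hasDerivAt_rpow_const (p := -ρ₁) (Or.inl hx)).add_const (y ^ (-ρ₂))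
  exact h.deriv

lemma pY_eval (ρ₁ ρ₂ x y : ℝ) (hy : y ≠ 0) :
    pY (fun x y => x ^ (-ρ₁) + y ^ (-ρ₂)) x y = -ρ₂ * y ^ (-ρ₂ - 1) := by
  unfold pY
  have h : HasDerivAt (fun t : ℝ => x ^ (-ρ₁) + t ^ (-ρ₂)) (-ρ₂ * y ^ (-ρ₂ - 1)) y := by
    simpa using (Real.hasDerivAt_rpow_const (p := -ρ₂) (Or.inl hy)).const_add (x ^ (-ρ₁))
  exact h.deriv

lemma pXX_eval (ρ₁ ρ₂ x y : ℝ) (hx : x ≠ 0) :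
    pXX (fun x y => x ^ (-ρ₁) + y ^ (-ρ₂)) x y = ρ₁ * (ρ₁ + 1) * x ^ (-ρ₁ - 2) := by
  unfold pXX
  have hev : (fun t => pX (fun x y => x ^ (-ρ₁) + y ^ (-ρ₂)) t y)
      =ᶠ[nhds x] fun t => -ρ₁ * t ^ (-ρ₁ - 1) := by
    filter_upwards [eventually_ne_nhds hx] with t ht
    exact pX_eval ρ₁ ρ₂ t y ht
  rw [hev.deriv_eq]
  have h : HasDerivAt (fun t : ℝ => -ρ₁ * t ^ (-ρ₁ - 1))
      (-ρ₁ * ((-ρ₁ - 1) * x ^ (-ρ₁ - 1 - 1))) x :=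
    (Real.hasDerivAt_rpow_const (p := -ρ₁ - 1) (Or.inl hx)).const_mul (-ρ₁)
  rw [h.deriv, show (-ρ₁ - 1 - 1 : ℝ) = -ρ₁ - 2 by ring]
  ring

lemma pYY_eval (ρ₁ ρ₂ x y : ℝ) (hy : y ≠ 0) :
    pYY (fun x y => x ^ (-ρ₁) + y ^ (-ρ₂)) x y = ρ₂ * (ρ₂ + 1) * y ^ (-ρ₂ - 2) := by
  unfold pYY
  have hev : (fun t => pY (fun x y => x ^ (-ρ₁) + y ^ (-ρ₂)) x t)
      =ᶠ[nhds y] fun t => -ρ₂ * t ^ (-ρ₂ - 1) := by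
    filter_upwards [eventually_ne_nhds hy] with t ht
    exact pY_eval ρ₁ ρ₂ x t ht
  rw [hev.deriv_eq]
  have h : HasDerivAt (fun t : ℝ => -ρ₂ * t ^ (-ρ₂ - 1))
      (-ρ₂ * ((-ρ₂ - 1) * y ^ (-ρ₂ - 1 - 1))) y :=
    (Real.hasDerivAt_rpow_const (p := -ρ₂ - 1) (Or.inl hy)).const_mul (-ρ₂)
  rw [h.deriv, show (-ρ₂ - 1 - 1 : ℝ) = -ρ₂ - 2 by ring]
  ring

lemma rExp_le {α r₀ r₁ r₂ b₀ b₁ b₂ v : ℝ}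
    (hv : (b₀ ≠ 0 ∧ v = r₀ - 1) ∨ (b₁ ≠ 0 ∧ v = r₁ - 2) ∨ (b₂ ≠ 0 ∧ v = r₂ - α)) :
    rExp α r₀ r₁ r₂ b₀ b₁ b₂ ≤ v := by
  apply csInf_le
  · refine ⟨min (min (r₀ - 1) (r₁ - 2)) (r₂ - α), ?_⟩
    rintro w (⟨-, rfl⟩ | ⟨-, rfl⟩ | ⟨-, rfl⟩)
    · exact le_trans (min_le_left _ _) (min_le_left _ _)
    · exact le_trans (min_le_left _ _) (min_le_right _ _)
    · exact min_le_right _ _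
  · exact hv

lemma pow_absorb {x n e f : ℝ} (hx : 0 < x) (hxn : x ≤ n) (hef : f ≤ e) :
    x ^ e ≤ n ^ (e - f) * x ^ f := by
  have h1 : x ^ e = x ^ (e - f) * x ^ f := by
    rw [← Real.rpow_add hx]; ring_nf
  rw [h1]
  exact mul_le_mul_of_nonneg_right (Real.rpow_le_rpow hx.le hxn (by linarith))
    (Real.rpow_pos_of_pos hx _).le

lemma side_bound {κ θ r ρ ρ' n A B : ℝ} (hκ : 0 < κ) (hA : 0 < A) (hρ' : 0 < ρ')
    (hn : 1 ≤ n)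
    (hopt : 0 ≤ r ∨ (0 < r + 1 - θ ∧ κ * (ρ - r) ≤ (r + 1 - θ) * ρ')) (hB : 0 ≤ B) :
    ∃ C : ℝ, 0 ≤ C ∧ ∀ x y : ℝ, 0 < x → x ≤ n → 0 < y →
      B * x ^ (r - ρ) - A * x ^ (θ - 1 - ρ) * y ^ κ ≤ C * (x ^ (-ρ) + y ^ (-ρ')) := by
  have hn0 : (0:ℝ) < n := lt_of_lt_of_le one_pos hn
  rcases hopt with hr | ⟨hβ, hle⟩
  · refine ⟨B * n ^ r, by positivity, fun x y hx hxn hy => ?_⟩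
    have h1 : x ^ (r - ρ) ≤ n ^ r * x ^ (-ρ) := by
      have := pow_absorb (e := r - ρ) (f := -ρ) hx hxn (by linarith)
      simpa [show r - ρ - -ρ = r by ring] using this
    have h2 : B * x ^ (r - ρ) ≤ B * n ^ r * x ^ (-ρ) := by
      calc B * x ^ (r - ρ) ≤ B * (n ^ r * x ^ (-ρ)) := mul_le_mul_of_nonneg_left h1 hB
        _ = B * n ^ r * x ^ (-ρ) := by ring
    have h3 : 0 ≤ A * x ^ (θ - 1 - ρ) * y ^ κ := by positivity
    have h4 : 0 ≤ B * n ^ r * y ^ (-ρ') := by positivity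
    nlinarith [h2, h3, h4]
  · set β := r + 1 - θ with hβdef
    set δ := β * ρ' / κ + r - ρ with hδdef
    have hδ : 0 ≤ δ := by
      rw [hδdef]
      have h1 : 0 ≤ β * ρ' / κ - (ρ - r) := by
        rw [sub_nonneg, le_div_iff₀ hκ]
        nlinarith
      linarith
    refine ⟨B * n ^ δ * (B / A) ^ (ρ' / κ), by positivity, fun x y hx hxn hy => ?_⟩
    set C := B * n ^ δ * (B / A) ^ (ρ' / κ) with hC
    have hCnn : 0 ≤ C := by positivity
    have hgpos : 0 < x ^ (-ρ) + y ^ (-ρ') := by positivity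
    by_cases hcase : B * x ^ β ≤ A * y ^ κ
    · have e1 : x ^ (r - ρ) = x ^ β * x ^ (θ - 1 - ρ) := by
        rw [← Real.rpow_add hx]; congr 1; rw [hβdef]; ring
      have h1 : B * x ^ (r - ρ) ≤ A * x ^ (θ - 1 - ρ) * y ^ κ := by
        rw [e1]
        calc B * (x ^ β * x ^ (θ - 1 - ρ)) = B * x ^ β * x ^ (θ - 1 - ρ) := by ring
          _ ≤ A * y ^ κ * x ^ (θ - 1 - ρ) :=
            mul_le_mul_of_nonneg_right hcase (Real.rpow_pos_of_pos hx _).le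
          _ = A * x ^ (θ - 1 - ρ) * y ^ κ := by ring
      nlinarith [mul_nonneg hCnn hgpos.le]
    · push_neg at hcase
      have hypos : 0 < A * y ^ κ := by positivity
      have hBpos : 0 < B := by
        rcases hB.lt_or_eq with h | h
        · exact h
        · exfalso; rw [← h] at hcase; simp at hcase; nlinarith [Real.rpow_pos_of_pos hx β]
      have hyk : y ^ κ < B / A * x ^ β := by
        rw [div_mul_eq_mul_div, lt_div_iff₀ hA]
        nlinarith
      have key : y ^ ρ' ≤ (B / A) ^ (ρ' / κ) * x ^ (β * ρ' / κ) := by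
        have e1 : y ^ ρ' = (y ^ κ) ^ (ρ' / κ) := by
          rw [← Real.rpow_mul hy.le]
          congr 1
          field_simp
        have e2 : (x ^ β) ^ (ρ' / κ) = x ^ (β * ρ' / κ) := by
          rw [← Real.rpow_mul hx.le]
          congr 1
          field_simp
        rw [e1, ← e2, ← Real.mul_rpow (by positivity) (by positivity)]
        exact Real.rpow_le_rpow (by positivity) hyk.le (by positivity)
      have key2 : B * x ^ (r - ρ) * y ^ ρ' ≤ C := by
        have h1 : B * x ^ (r - ρ) * y ^ ρ' ≤ B * x ^ (r - ρ) *
            ((B / A) ^ (ρ' / κ) * x ^ (β * ρ' / κ)) :=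
          mul_le_mul_of_nonneg_left key (by positivity)
        have e3 : x ^ (r - ρ) * x ^ (β * ρ' / κ) = x ^ δ := by
          rw [← Real.rpow_add hx]; congr 1; rw [hδdef]; ring
        have h2 : B * x ^ (r - ρ) * ((B / A) ^ (ρ' / κ) * x ^ (β * ρ' / κ))
            = B * (B / A) ^ (ρ' / κ) * x ^ δ := by
          rw [← e3]; ring
        have h3 : B * (B / A) ^ (ρ' / κ) * x ^ δ ≤ B * (B / A) ^ (ρ' / κ) * n ^ δ :=
          mul_le_mul_of_nonneg_left (Real.rpow_le_rpow hx.le hxn hδ) (by positivity)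
        rw [hC]
        calc B * x ^ (r - ρ) * y ^ ρ' ≤ B * (B / A) ^ (ρ' / κ) * x ^ δ := by
              rw [← h2]; exact h1
          _ ≤ B * (B / A) ^ (ρ' / κ) * n ^ δ := h3
          _ = B * n ^ δ * (B / A) ^ (ρ' / κ) := by ring
      have hyρ : 0 < y ^ ρ' := Real.rpow_pos_of_pos hy _
      have key3 : B * x ^ (r - ρ) ≤ C * y ^ (-ρ') := by
        rw [Real.rpow_neg hy.le]
        rw [← le_div_iff₀ hyρ] at key2
        calc B * x ^ (r - ρ) ≤ C / y ^ ρ' := key2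
          _ = C * (y ^ ρ')⁻¹ := by ring
      have h4 : 0 ≤ A * x ^ (θ - 1 - ρ) * y ^ κ := by positivity
      have h5 : 0 ≤ C * x ^ (-ρ) := mul_nonneg hCnn (by positivity)
      nlinarith

lemma rho_choice (θ₁ θ₂ κ₁ κ₂ r₁ r₂ : ℝ) (hκ₁ : 0 < κ₁) (hκ₂ : 0 < κ₂)
    (hθ₁ : 0 ≤ θ₁) (hθ₂ : 0 ≤ θ₂)
    (hcond : (0 ≤ r₁ ∧ θ₂ - 1 < r₂ ∧ r₂ < 0) ∨
      (0 ≤ r₂ ∧ θ₁ - 1 < r₁ ∧ r₁ < 0) ∨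
      (θ₁ - 1 < r₁ ∧ r₁ < 0 ∧ θ₂ - 1 < r₂ ∧ r₂ < 0 ∧
        (r₁ + 1 - θ₁) * (r₂ + 1 - θ₂) > κ₁ * κ₂)) :
    ∃ ρ₁ ρ₂ : ℝ, ρ₁ > max θ₁ θ₂ ∧ ρ₂ > max θ₁ θ₂ ∧
      (0 ≤ r₁ ∨ (0 < r₁ + 1 - θ₁ ∧ κ₁ * (ρ₁ - r₁) ≤ (r₁ + 1 - θ₁) * ρ₂)) ∧
      (0 ≤ r₂ ∨ (0 < r₂ + 1 - θ₂ ∧ κ₂ * (ρ₂ - r₂) ≤ (r₂ + 1 - θ₂) * ρ₁)) := by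
  set M := max θ₁ θ₂ with hM
  have hM0 : 0 ≤ M := le_trans hθ₁ (le_max_left _ _)
  rcases hcond with ⟨h1, h2, h3⟩ | ⟨h1, h2, h3⟩ | ⟨h1, h2, h3, h4, h5⟩
  · -- r₁ ≥ 0, r₂ ∈ (θ₂-1, 0)
    set β₂ := r₂ + 1 - θ₂ with hβ₂
    have hβ₂0 : 0 < β₂ := by rw [hβ₂]; linarith
    set ρ₂ := M + 1 with hρ₂
    set ρ₁ := max (M + 1) (κ₂ * (ρ₂ - r₂) / β₂) with hρ₁
    refine ⟨ρ₁, ρ₂, ?_, by rw [hρ₂]; linarith, Or.inl h1, Or.inr ⟨hβ₂0, ?_⟩⟩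
    · calc M < M + 1 := by linarith
        _ ≤ ρ₁ := le_max_left _ _
    · have : κ₂ * (ρ₂ - r₂) / β₂ ≤ ρ₁ := le_max_right _ _
      rw [div_le_iff₀ hβ₂0] at this
      linarith [this]
  · set β₁ := r₁ + 1 - θ₁ with hβ₁
    have hβ₁0 : 0 < β₁ := by rw [hβ₁]; linarith
    set ρ₁ := M + 1 with hρ₁'
    set ρ₂ := max (M + 1) (κ₁ * (ρ₁ - r₁) / β₁) with hρ₂'
    refine ⟨ρ₁, ρ₂, by rw [hρ₁']; linarith, ?_, Or.inr ⟨hβ₁0, ?_⟩, Or.inl h1⟩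
    · calc M < M + 1 := by linarith
        _ ≤ ρ₂ := le_max_left _ _
    · have : κ₁ * (ρ₁ - r₁) / β₁ ≤ ρ₂ := le_max_right _ _
      rw [div_le_iff₀ hβ₁0] at this
      linarith [this]
  · set β₁ := r₁ + 1 - θ₁ with hβ₁
    set β₂ := r₂ + 1 - θ₂ with hβ₂
    have hβ₁0 : 0 < β₁ := by rw [hβ₁]; linarith
    have hβ₂0 : 0 < β₂ := by rw [hβ₂]; linarith
    have hD : 0 < β₁ * β₂ - κ₁ * κ₂ := by nlinarith
    set t := max (max (M + 1) ((-(κ₁ * κ₂ * r₁) - κ₂ * r₂ * β₁) / (β₁ * β₂ - κ₁ * κ₂)))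
      (r₁ + M * β₁ / κ₁) + 1 with ht
    have ht1 : M + 1 ≤ t - 1 := by
      rw [ht]; simp only [add_sub_cancel_right]
      exact le_trans (le_max_left _ _) (le_max_left _ _)
    have ht2 : (-(κ₁ * κ₂ * r₁) - κ₂ * r₂ * β₁) / (β₁ * β₂ - κ₁ * κ₂) ≤ t := by
      rw [ht]
      have := le_trans (le_max_right _ _)
        (le_max_left (max (M + 1) ((-(κ₁ * κ₂ * r₁) - κ₂ * r₂ * β₁) / (β₁ * β₂ - κ₁ * κ₂)))
          (r₁ + M * β₁ / κ₁))
      linarith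
    have ht3 : r₁ + M * β₁ / κ₁ < t := by
      rw [ht]
      have := le_max_right (max (M + 1) ((-(κ₁ * κ₂ * r₁) - κ₂ * r₂ * β₁) / (β₁ * β₂ - κ₁ * κ₂)))
        (r₁ + M * β₁ / κ₁)
      linarith
    set ρ₂ := κ₁ * (t - r₁) / β₁ with hρ₂d
    refine ⟨t, ρ₂, by linarith, ?_, Or.inr ⟨hβ₁0, ?_⟩, Or.inr ⟨hβ₂0, ?_⟩⟩
    · -- ρ₂ > M
      rw [hρ₂d, gt_iff_lt, lt_div_iff₀ hβ₁0]
      have : M * β₁ / κ₁ < t - r₁ := by linarith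
      rw [div_lt_iff₀ hκ₁] at this
      nlinarith
    · rw [hρ₂d]
      rw [mul_div_assoc']
      rw [le_div_iff₀ hβ₁0]
      exact le_of_eq (by ring)
    · rw [hρ₂d]
      rw [div_le_iff₀ hD] at ht2
      have hexp : κ₂ * (κ₁ * (t - r₁) / β₁ - r₂) ≤ β₂ * t ↔
          κ₂ * (κ₁ * (t - r₁) - r₂ * β₁) ≤ β₂ * t * β₁ := by
        rw [div_sub' hβ₁0.ne', ← mul_div_assoc, div_le_iff₀ hβ₁0]
        constructor <;> intro h <;> nlinarith [h]
      rw [hexp]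
      nlinarith

set_option maxHeartbeats 1600000 in
theorem lemma_t3_3 (α₁ α₂ a₁ a₂ κ₁ κ₂ θ₁ θ₂ r₁₀ r₁₁ r₁₂ r₂₀ r₂₁ r₂₂
    b₁₀ b₁₁ b₁₂ b₂₀ b₂₁ b₂₂ : ℝ)
    (hα₁ : 1 < α₁) (hα₁' : α₁ < 2) (hα₂ : 1 < α₂) (hα₂' : α₂ < 2)
    (ha₁ : 0 < a₁) (ha₂ : 0 < a₂) (hκ₁ : 0 < κ₁) (hκ₂ : 0 < κ₂)
    (hθ₁ : 0 ≤ θ₁) (hθ₂ : 0 ≤ θ₂)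
    (hr₁₀ : 0 ≤ r₁₀) (hr₁₁ : 0 ≤ r₁₁) (hr₁₂ : 0 ≤ r₁₂)
    (hr₂₀ : 0 ≤ r₂₀) (hr₂₁ : 0 ≤ r₂₁) (hr₂₂ : 0 ≤ r₂₂)
    (hb₁₀ : 0 ≤ b₁₀) (hb₁₁ : 0 ≤ b₁₁) (hb₁₂ : 0 ≤ b₁₂)
    (hb₂₀ : 0 ≤ b₂₀) (hb₂₁ : 0 ≤ b₂₁) (hb₂₂ : 0 ≤ b₂₂)
    (hb1 : 0 < b₁₁ + b₁₂) (hb2 : 0 < b₂₁ + b₂₂)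
    (r₁ r₂ : ℝ)
    (hr₁ : r₁ = rExp α₁ r₁₀ r₁₁ r₁₂ b₁₀ b₁₁ b₁₂)
    (hr₂ : r₂ = rExp α₂ r₂₀ r₂₁ r₂₂ b₂₀ b₂₁ b₂₂)
    (hcond : (0 ≤ r₁ ∧ θ₂ - 1 < r₂ ∧ r₂ < 0) ∨
      (0 ≤ r₂ ∧ θ₁ - 1 < r₁ ∧ r₁ < 0) ∨
      (θ₁ - 1 < r₁ ∧ r₁ < 0 ∧ θ₂ - 1 < r₂ ∧ r₂ < 0 ∧
        (r₁ + 1 - θ₁) * (r₂ + 1 - θ₂) > κ₁ * κ₂)) :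
    ∃ ρ₁ ρ₂ : ℝ, ρ₁ > max θ₁ θ₂ ∧ ρ₂ > max θ₁ θ₂ ∧
      ∀ n : ℕ, 1 ≤ n → ∃ C : ℝ, 0 < C ∧
        ∀ x y : ℝ, 0 < x → x ≤ (n : ℝ) → 0 < y → y ≤ (n : ℝ) →
          Lop α₁ α₂ a₁ a₂ κ₁ κ₂ θ₁ θ₂ r₁₀ r₁₁ r₁₂ r₂₀ r₂₁ r₂₂ b₁₀ b₁₁ b₁₂ b₂₀ b₂₁ b₂₂
              (fun x y => x ^ (-ρ₁) + y ^ (-ρ₂)) x y ≤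
            C * (x ^ (-ρ₁) + y ^ (-ρ₂)) := by
  obtain ⟨ρ₁, ρ₂, hρ₁M, hρ₂M, hc1, hc2⟩ :=
    rho_choice θ₁ θ₂ κ₁ κ₂ r₁ r₂ hκ₁ hκ₂ hθ₁ hθ₂ hcond
  have hM0 : 0 ≤ max θ₁ θ₂ := le_trans hθ₁ (le_max_left _ _)
  have hρ₁0 : 0 < ρ₁ := lt_of_le_of_lt hM0 hρ₁M
  have hρ₂0 : 0 < ρ₂ := lt_of_le_of_lt hM0 hρ₂M
  refine ⟨ρ₁, ρ₂, hρ₁M, hρ₂M, fun n hn => ?_⟩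
  have hn1 : (1:ℝ) ≤ (n:ℝ) := by exact_mod_cast hn
  have hn0 : (0:ℝ) < (n:ℝ) := by linarith
  have hA₁ : 0 < a₁ * ρ₁ := by positivity
  have hA₂ : 0 < a₂ * ρ₂ := by positivity
  set B₁ : ℝ := ρ₁ * (if b₁₀ = 0 then 0 else b₁₀ * (n:ℝ) ^ (r₁₀ - 1 - r₁))
    + ρ₁ * (ρ₁ + 1) * (if b₁₁ = 0 then 0 else b₁₁ * (n:ℝ) ^ (r₁₁ - 2 - r₁))
    + jumpC α₁ ρ₁ * (if b₁₂ = 0 then 0 else b₁₂ * (n:ℝ) ^ (r₁₂ - α₁ - r₁)) with hB₁def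
  set B₂ : ℝ := ρ₂ * (if b₂₀ = 0 then 0 else b₂₀ * (n:ℝ) ^ (r₂₀ - 1 - r₂))
    + ρ₂ * (ρ₂ + 1) * (if b₂₁ = 0 then 0 else b₂₁ * (n:ℝ) ^ (r₂₁ - 2 - r₂))
    + jumpC α₂ ρ₂ * (if b₂₂ = 0 then 0 else b₂₂ * (n:ℝ) ^ (r₂₂ - α₂ - r₂)) with hB₂def
  have hifnn : ∀ b e : ℝ, 0 ≤ b →
      0 ≤ (if b = 0 then 0 else b * (n:ℝ) ^ e) := by
    intro b e hb
    split_ifs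
    · exact le_refl 0
    · exact mul_nonneg hb (Real.rpow_pos_of_pos hn0 _).le
  have hB₁nn : 0 ≤ B₁ := by
    rw [hB₁def]
    refine add_nonneg (add_nonneg ?_ ?_) ?_
    · exact mul_nonneg hρ₁0.le (hifnn _ _ hb₁₀)
    · exact mul_nonneg (by positivity) (hifnn _ _ hb₁₁)
    · exact mul_nonneg (jumpC_pos hα₁ hα₁' hρ₁0).le (hifnn _ _ hb₁₂)
  have hB₂nn : 0 ≤ B₂ := by
    rw [hB₂def]
    refine add_nonneg (add_nonneg ?_ ?_) ?_
    · exact mul_nonneg hρ₂0.le (hifnn _ _ hb₂₀)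
    · exact mul_nonneg (by positivity) (hifnn _ _ hb₂₁)
    · exact mul_nonneg (jumpC_pos hα₂ hα₂' hρ₂0).le (hifnn _ _ hb₂₂)
  obtain ⟨C₁, hC₁nn, hC₁⟩ := side_bound (n := (n:ℝ)) hκ₁ hA₁ hρ₂0 hn1 hc1 hB₁nn
  obtain ⟨C₂, hC₂nn, hC₂⟩ := side_bound (n := (n:ℝ)) hκ₂ hA₂ hρ₁0 hn1 hc2 hB₂nn
  refine ⟨C₁ + C₂ + 1, by positivity, fun x y hx hxn hy hyn => ?_⟩
  have hgpos : 0 < x ^ (-ρ₁) + y ^ (-ρ₂) := by positivity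
  have hJ₁ := jump_integral_le hα₁ hα₁' hρ₁0 hx
  have hJ₂ := jump_integral_le hα₂ hα₂' hρ₂0 hy
  simp only [Lop]
  rw [pX_eval ρ₁ ρ₂ x y hx.ne', pY_eval ρ₁ ρ₂ x y hy.ne',
    pXX_eval ρ₁ ρ₂ x y hx.ne', pYY_eval ρ₁ ρ₂ x y hy.ne']
  have hi1 : (fun z => (x + z) ^ (-ρ₁) + y ^ (-ρ₂) - (x ^ (-ρ₁) + y ^ (-ρ₂))
        - z * (-ρ₁ * x ^ (-ρ₁ - 1)))
      = fun z => ((x + z) ^ (-ρ₁) - x ^ (-ρ₁) - z * (-ρ₁ * x ^ (-ρ₁ - 1))) := by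
    funext z; ring
  have hi2 : (fun z => x ^ (-ρ₁) + (y + z) ^ (-ρ₂) - (x ^ (-ρ₁) + y ^ (-ρ₂))
        - z * (-ρ₂ * y ^ (-ρ₂ - 1)))
      = fun z => ((y + z) ^ (-ρ₂) - y ^ (-ρ₂) - z * (-ρ₂ * y ^ (-ρ₂ - 1))) := by
    funext z; ring
  rw [hi1, hi2]
  have ht1 : a₁ * x ^ θ₁ * y ^ κ₁ * (-ρ₁ * x ^ (-ρ₁ - 1))
      = -(a₁ * ρ₁ * x ^ (θ₁ - 1 - ρ₁) * y ^ κ₁) := by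
    rw [show θ₁ - 1 - ρ₁ = θ₁ + (-ρ₁ - 1) by ring, Real.rpow_add hx]; ring
  have ht2 : a₂ * y ^ θ₂ * x ^ κ₂ * (-ρ₂ * y ^ (-ρ₂ - 1))
      = -(a₂ * ρ₂ * y ^ (θ₂ - 1 - ρ₂) * x ^ κ₂) := by
    rw [show θ₂ - 1 - ρ₂ = θ₂ + (-ρ₂ - 1) by ring, Real.rpow_add hy]; ring
  have hpa : ∀ b co e emn : ℝ, 0 ≤ b → 0 ≤ co → r₁ - ρ₁ ≤ e → emn = e - (r₁ - ρ₁) →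
      b * co * x ^ e ≤ co * (b * (n:ℝ) ^ emn) * x ^ (r₁ - ρ₁) := by
    intro b co e emn hb hco hre hemn
    have := pow_absorb (n := (n:ℝ)) hx hxn hre
    calc b * co * x ^ e ≤ b * co * ((n:ℝ) ^ (e - (r₁ - ρ₁)) * x ^ (r₁ - ρ₁)) :=
          mul_le_mul_of_nonneg_left this (by positivity)
      _ = co * (b * (n:ℝ) ^ emn) * x ^ (r₁ - ρ₁) := by rw [hemn]; ring
  have hpa2 : ∀ b co e emn : ℝ, 0 ≤ b → 0 ≤ co → r₂ - ρ₂ ≤ e → emn = e - (r₂ - ρ₂) →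
      b * co * y ^ e ≤ co * (b * (n:ℝ) ^ emn) * y ^ (r₂ - ρ₂) := by
    intro b co e emn hb hco hre hemn
    have := pow_absorb (n := (n:ℝ)) hy hyn hre
    calc b * co * y ^ e ≤ b * co * ((n:ℝ) ^ (e - (r₂ - ρ₂)) * y ^ (r₂ - ρ₂)) :=
          mul_le_mul_of_nonneg_left this (by positivity)
      _ = co * (b * (n:ℝ) ^ emn) * y ^ (r₂ - ρ₂) := by rw [hemn]; ring
  have ht3 : -(b₁₀ * x ^ r₁₀ * (-ρ₁ * x ^ (-ρ₁ - 1)))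
      ≤ ρ₁ * (if b₁₀ = 0 then 0 else b₁₀ * (n:ℝ) ^ (r₁₀ - 1 - r₁)) * x ^ (r₁ - ρ₁) := by
    by_cases hb : b₁₀ = 0
    · simp [hb]
    · rw [if_neg hb]
      have hre : r₁ ≤ r₁₀ - 1 := by rw [hr₁]; exact rExp_le (Or.inl ⟨hb, rfl⟩)
      have e1 : -(b₁₀ * x ^ r₁₀ * (-ρ₁ * x ^ (-ρ₁ - 1))) = b₁₀ * ρ₁ * x ^ (r₁₀ - 1 - ρ₁) := by
        rw [show r₁₀ - 1 - ρ₁ = r₁₀ + (-ρ₁ - 1) by ring, Real.rpow_add hx]; ring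
      rw [e1]
      exact hpa b₁₀ ρ₁ (r₁₀ - 1 - ρ₁) (r₁₀ - 1 - r₁) hb₁₀ hρ₁0.le (by linarith) (by ring)
  have ht4 : b₁₁ * x ^ r₁₁ * (ρ₁ * (ρ₁ + 1) * x ^ (-ρ₁ - 2))
      ≤ ρ₁ * (ρ₁ + 1) * (if b₁₁ = 0 then 0 else b₁₁ * (n:ℝ) ^ (r₁₁ - 2 - r₁)) * x ^ (r₁ - ρ₁) := by
    by_cases hb : b₁₁ = 0
    · simp [hb]
    · rw [if_neg hb]
      have hre : r₁ ≤ r₁₁ - 2 := by rw [hr₁]; exact rExp_le (Or.inr (Or.inl ⟨hb, rfl⟩))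
      have e1 : b₁₁ * x ^ r₁₁ * (ρ₁ * (ρ₁ + 1) * x ^ (-ρ₁ - 2))
          = b₁₁ * (ρ₁ * (ρ₁ + 1)) * x ^ (r₁₁ - 2 - ρ₁) := by
        rw [show r₁₁ - 2 - ρ₁ = r₁₁ + (-ρ₁ - 2) by ring, Real.rpow_add hx]; ring
      rw [e1]
      exact hpa b₁₁ (ρ₁ * (ρ₁ + 1)) (r₁₁ - 2 - ρ₁) (r₁₁ - 2 - r₁) hb₁₁ (by positivity)
        (by linarith) (by ring)
  have ht5 : b₁₂ * x ^ r₁₂ *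
        (∫ z in Set.Ioi (0:ℝ), ((x + z) ^ (-ρ₁) - x ^ (-ρ₁) - z * (-ρ₁ * x ^ (-ρ₁ - 1)))
          ∂ muStable α₁)
      ≤ jumpC α₁ ρ₁ * (if b₁₂ = 0 then 0 else b₁₂ * (n:ℝ) ^ (r₁₂ - α₁ - r₁)) * x ^ (r₁ - ρ₁) := by
    by_cases hb : b₁₂ = 0
    · simp [hb]
    · rw [if_neg hb]
      have hre : r₁ ≤ r₁₂ - α₁ := by rw [hr₁]; exact rExp_le (Or.inr (Or.inr ⟨hb, rfl⟩))
      have h1 : b₁₂ * x ^ r₁₂ * (∫ z in Set.Ioi (0:ℝ),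
            ((x + z) ^ (-ρ₁) - x ^ (-ρ₁) - z * (-ρ₁ * x ^ (-ρ₁ - 1))) ∂ muStable α₁)
          ≤ b₁₂ * x ^ r₁₂ * (jumpC α₁ ρ₁ * x ^ (-ρ₁ - α₁)) :=
        mul_le_mul_of_nonneg_left hJ₁ (by positivity)
      have e1 : b₁₂ * x ^ r₁₂ * (jumpC α₁ ρ₁ * x ^ (-ρ₁ - α₁))
          = b₁₂ * jumpC α₁ ρ₁ * x ^ (r₁₂ - α₁ - ρ₁) := by
        rw [show r₁₂ - α₁ - ρ₁ = r₁₂ + (-ρ₁ - α₁) by ring, Real.rpow_add hx]; ring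
      refine h1.trans ?_
      rw [e1]
      exact hpa b₁₂ (jumpC α₁ ρ₁) (r₁₂ - α₁ - ρ₁) (r₁₂ - α₁ - r₁) hb₁₂
        (jumpC_pos hα₁ hα₁' hρ₁0).le (by linarith) (by ring)
  have ht6 : -(b₂₀ * y ^ r₂₀ * (-ρ₂ * y ^ (-ρ₂ - 1)))
      ≤ ρ₂ * (if b₂₀ = 0 then 0 else b₂₀ * (n:ℝ) ^ (r₂₀ - 1 - r₂)) * y ^ (r₂ - ρ₂) := by
    by_cases hb : b₂₀ = 0
    · simp [hb]
    · rw [if_neg hb]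
      have hre : r₂ ≤ r₂₀ - 1 := by rw [hr₂]; exact rExp_le (Or.inl ⟨hb, rfl⟩)
      have e1 : -(b₂₀ * y ^ r₂₀ * (-ρ₂ * y ^ (-ρ₂ - 1))) = b₂₀ * ρ₂ * y ^ (r₂₀ - 1 - ρ₂) := by
        rw [show r₂₀ - 1 - ρ₂ = r₂₀ + (-ρ₂ - 1) by ring, Real.rpow_add hy]; ring
      rw [e1]
      exact hpa2 b₂₀ ρ₂ (r₂₀ - 1 - ρ₂) (r₂₀ - 1 - r₂) hb₂₀ hρ₂0.le (by linarith) (by ring)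
  have ht7 : b₂₁ * y ^ r₂₁ * (ρ₂ * (ρ₂ + 1) * y ^ (-ρ₂ - 2))
      ≤ ρ₂ * (ρ₂ + 1) * (if b₂₁ = 0 then 0 else b₂₁ * (n:ℝ) ^ (r₂₁ - 2 - r₂)) * y ^ (r₂ - ρ₂) := by
    by_cases hb : b₂₁ = 0
    · simp [hb]
    · rw [if_neg hb]
      have hre : r₂ ≤ r₂₁ - 2 := by rw [hr₂]; exact rExp_le (Or.inr (Or.inl ⟨hb, rfl⟩))
      have e1 : b₂₁ * y ^ r₂₁ * (ρ₂ * (ρ₂ + 1) * y ^ (-ρ₂ - 2))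
          = b₂₁ * (ρ₂ * (ρ₂ + 1)) * y ^ (r₂₁ - 2 - ρ₂) := by
        rw [show r₂₁ - 2 - ρ₂ = r₂₁ + (-ρ₂ - 2) by ring, Real.rpow_add hy]; ring
      rw [e1]
      exact hpa2 b₂₁ (ρ₂ * (ρ₂ + 1)) (r₂₁ - 2 - ρ₂) (r₂₁ - 2 - r₂) hb₂₁ (by positivity)
        (by linarith) (by ring)
  have ht8 : b₂₂ * y ^ r₂₂ *
        (∫ z in Set.Ioi (0:ℝ), ((y + z) ^ (-ρ₂) - y ^ (-ρ₂) - z * (-ρ₂ * y ^ (-ρ₂ - 1)))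
          ∂ muStable α₂)
      ≤ jumpC α₂ ρ₂ * (if b₂₂ = 0 then 0 else b₂₂ * (n:ℝ) ^ (r₂₂ - α₂ - r₂)) * y ^ (r₂ - ρ₂) := by
    by_cases hb : b₂₂ = 0
    · simp [hb]
    · rw [if_neg hb]
      have hre : r₂ ≤ r₂₂ - α₂ := by rw [hr₂]; exact rExp_le (Or.inr (Or.inr ⟨hb, rfl⟩))
      have h1 : b₂₂ * y ^ r₂₂ * (∫ z in Set.Ioi (0:ℝ),
            ((y + z) ^ (-ρ₂) - y ^ (-ρ₂) - z * (-ρ₂ * y ^ (-ρ₂ - 1))) ∂ muStable α₂)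
          ≤ b₂₂ * y ^ r₂₂ * (jumpC α₂ ρ₂ * y ^ (-ρ₂ - α₂)) :=
        mul_le_mul_of_nonneg_left hJ₂ (by positivity)
      have e1 : b₂₂ * y ^ r₂₂ * (jumpC α₂ ρ₂ * y ^ (-ρ₂ - α₂))
          = b₂₂ * jumpC α₂ ρ₂ * y ^ (r₂₂ - α₂ - ρ₂) := by
        rw [show r₂₂ - α₂ - ρ₂ = r₂₂ + (-ρ₂ - α₂) by ring, Real.rpow_add hy]; ring
      refine h1.trans ?_
      rw [e1]
      exact hpa2 b₂₂ (jumpC α₂ ρ₂) (r₂₂ - α₂ - ρ₂) (r₂₂ - α₂ - r₂) hb₂₂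
        (jumpC_pos hα₂ hα₂' hρ₂0).le (by linarith) (by ring)
  have hs₁ := hC₁ x y hx hxn hy
  have hs₂ := hC₂ y x hy hyn hx
  have hBx : B₁ * x ^ (r₁ - ρ₁)
      = ρ₁ * (if b₁₀ = 0 then 0 else b₁₀ * (n:ℝ) ^ (r₁₀ - 1 - r₁)) * x ^ (r₁ - ρ₁)
      + ρ₁ * (ρ₁ + 1) * (if b₁₁ = 0 then 0 else b₁₁ * (n:ℝ) ^ (r₁₁ - 2 - r₁)) * x ^ (r₁ - ρ₁)
      + jumpC α₁ ρ₁ * (if b₁₂ = 0 then 0 else b₁₂ * (n:ℝ) ^ (r₁₂ - α₁ - r₁)) * x ^ (r₁ - ρ₁) := by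
    rw [hB₁def]; ring
  have hBy : B₂ * y ^ (r₂ - ρ₂)
      = ρ₂ * (if b₂₀ = 0 then 0 else b₂₀ * (n:ℝ) ^ (r₂₀ - 1 - r₂)) * y ^ (r₂ - ρ₂)
      + ρ₂ * (ρ₂ + 1) * (if b₂₁ = 0 then 0 else b₂₁ * (n:ℝ) ^ (r₂₁ - 2 - r₂)) * y ^ (r₂ - ρ₂)
      + jumpC α₂ ρ₂ * (if b₂₂ = 0 then 0 else b₂₂ * (n:ℝ) ^ (r₂₂ - α₂ - r₂)) * y ^ (r₂ - ρ₂) := by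
    rw [hB₂def]; ring
  have hd1 : (C₁ + C₂ + 1) * (x ^ (-ρ₁) + y ^ (-ρ₂))
      = C₁ * (x ^ (-ρ₁) + y ^ (-ρ₂)) + C₂ * (y ^ (-ρ₂) + x ^ (-ρ₁))
        + (x ^ (-ρ₁) + y ^ (-ρ₂)) := by ring
  linarith [ht1, ht2, ht3, ht4, ht5, ht6, ht7, ht8, hs₁, hs₂, hBx, hBy, hd1, hgpos]
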